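/- Let E be a complex Hilbert space, let A, B : E →L[ℂ] E be bounded self-adjoint operators, and let x ∈ E. Define ψ(s) = exp(−isA)x and ψ_C(s) = exp(−isB)x (operator exponentials in the Banach algebra of bounded operators). Then for every s ∈ ℝ, the function s ↦ ‖ψ(s) − ψ_C(s)‖² is differentiable with derivative 2·Im⟨ψ(s), (A − B)ψ_C(s)⟩. -/

import Mathlib

/-- For unitary evolutions `ψ(s) = exp(−isA)x` and `ψ_C(s) = exp(−isB)x` generated by
bounded self-adjoint operators `A`, `B`, the squared distance `‖ψ(s) − ψ_C(s)‖²` is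
differentiable in `s` with derivative `2·Im⟨ψ(s), (A − B)ψ_C(s)⟩`. -/
theorem deriv_sq_dist_evolutions {E : Type*} [NormedAddCommGroup E]
    [InnerProductSpace ℂ E] [CompleteSpace E]
    (A B : E →L[ℂ] E) (hA : IsSelfAdjoint A) (hB : IsSelfAdjoint B) (x : E)
    (ψ ψC : ℝ → E)
    (hψ : ∀ s : ℝ, ψ s = NormedSpace.exp ((-(Complex.I * (s : ℂ))) • A) x)
    (hψC : ∀ s : ℝ, ψC s = NormedSpace.exp ((-(Complex.I * (s : ℂ))) • B) x) :
    ∀ s : ℝ, HasDerivAt (fun s : ℝ => ‖ψ s - ψC s‖ ^ 2)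
      (2 * (inner ℂ (ψ s) ((A - B) (ψC s)) : ℂ).im) s := by
  intro s
  -- Step 1: derivative of each evolution
  have key : ∀ (M : E →L[ℂ] E) (φ : ℝ → E),
      (∀ t : ℝ, φ t = NormedSpace.exp ((-(Complex.I * (t : ℂ))) • M) x) →
      HasDerivAt φ ((-Complex.I) • (M (φ s))) s := by
    intro M φ hφ
    set N : E →L[ℂ] E := (-Complex.I) • M with hN
    have harg : ∀ t : ℝ, (-(Complex.I * (t : ℂ))) • M = (t : ℂ) • N := by
      intro t; rw [hN, smul_smul]; ring_nf
    have h1 : HasDerivAt (fun u : ℂ => NormedSpace.exp (u • N))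
        (N * NormedSpace.exp ((s : ℂ) • N)) (s : ℂ) :=
      hasDerivAt_exp_smul_const' N (s : ℂ)
    have h2 : HasDerivAt (fun t : ℝ => NormedSpace.exp ((t : ℂ) • N))
        (N * NormedSpace.exp ((s : ℂ) • N)) s := by
      simpa [Function.comp_def] using HasDerivAt.scomp (𝕜 := ℝ) s h1 Complex.ofRealCLM.hasDerivAt
    set L : (E →L[ℂ] E) →L[ℝ] E :=
      ((ContinuousLinearMap.apply ℂ E x).restrictScalars ℝ) with hL
    have h3 : HasDerivAt (fun t : ℝ => L (NormedSpace.exp ((t : ℂ) • N)))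
        (L (N * NormedSpace.exp ((s : ℂ) • N))) s :=
      L.hasFDerivAt.comp_hasDerivAt s h2
    have hφeq : φ = fun t : ℝ => L (NormedSpace.exp ((t : ℂ) • N)) := by
      funext t
      simp [hφ t, harg t, hL]
    have hval : L (N * NormedSpace.exp ((s : ℂ) • N)) = (-Complex.I) • (M (φ s)) := by
      simp [hL, hN, hφ s, harg s, ContinuousLinearMap.mul_apply]
    rw [← hφeq] at h3
    rw [hval] at h3
    exact h3
  have hFA := key A ψ hψ
  have hFB := key B ψC hψC
  -- Step 2: derivative of squared norm via inner product
  set d' : E := (-Complex.I) • (A (ψ s)) - (-Complex.I) • (B (ψC s)) with hd'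
  have hsub : HasDerivAt (fun t => ψ t - ψC t) d' s := hFA.sub hFB
  have hinner : HasDerivAt (fun t => (inner ℂ (ψ t - ψC t) (ψ t - ψC t) : ℂ))
      ((inner ℂ (ψ s - ψC s) d' : ℂ) + inner ℂ d' (ψ s - ψC s)) s :=
    hsub.inner ℂ hsub
  have hre : HasDerivAt (fun t => ((inner ℂ (ψ t - ψC t) (ψ t - ψC t) : ℂ)).re)
      (((inner ℂ (ψ s - ψC s) d' : ℂ) + inner ℂ d' (ψ s - ψC s)).re) s :=
    Complex.reCLM.hasFDerivAt.comp_hasDerivAt s hinner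
  have hfun : (fun t : ℝ => ((inner ℂ (ψ t - ψC t) (ψ t - ψC t) : ℂ)).re)
      = fun t : ℝ => ‖ψ t - ψC t‖ ^ 2 := by
    funext t
    exact inner_self_eq_norm_sq (𝕜 := ℂ) _
  rw [hfun] at hre
  -- Step 3: identify the derivative value
  convert hre using 1
  have hsymA : ∀ y z : E, (inner ℂ (A y) z : ℂ) = inner ℂ y (A z) := by
    intro y z
    conv_lhs => rw [← hA.adjoint_eq]
    exact ContinuousLinearMap.adjoint_inner_left A z y
  have hsymB : ∀ y z : E, (inner ℂ (B y) z : ℂ) = inner ℂ y (B z) := by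
    intro y z
    conv_lhs => rw [← hB.adjoint_eq]
    exact ContinuousLinearMap.adjoint_inner_left B z y
  set u : ℂ := inner ℂ (ψ s) (A (ψC s)) with hu
  set v : ℂ := inner ℂ (ψ s) (B (ψC s)) with hv
  set p : ℂ := inner ℂ (ψ s) (A (ψ s)) with hp
  set q : ℂ := inner ℂ (ψC s) (B (ψC s)) with hq
  have hAsym : (inner ℂ (ψC s) (A (ψ s)) : ℂ) = starRingEnd ℂ u := by
    rw [← hsymA (ψ s) (ψC s)] at hu
    rw [hu]
    exact (inner_conj_symm _ _).symm
  have hAre : p.im = 0 := by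
    have h1 : starRingEnd ℂ p = p := by
      rw [hp, inner_conj_symm]
      exact hsymA (ψ s) (ψ s)
    have := congrArg Complex.im h1
    simp only [Complex.conj_im] at this
    linarith
  have hBre : q.im = 0 := by
    have h1 : starRingEnd ℂ q = q := by
      rw [hq, inner_conj_symm]
      exact hsymB (ψC s) (ψC s)
    have := congrArg Complex.im h1
    simp only [Complex.conj_im] at this
    linarith
  have hsum : ((inner ℂ (ψ s - ψC s) d' : ℂ) + inner ℂ d' (ψ s - ψC s)).re
      = 2 * ((inner ℂ (ψ s - ψC s) d' : ℂ)).re := by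
    have h1 : (inner ℂ d' (ψ s - ψC s) : ℂ) = starRingEnd ℂ (inner ℂ (ψ s - ψC s) d') :=
      (inner_conj_symm _ _).symm
    rw [h1, Complex.add_re, Complex.conj_re]
    ring
  have hexp : (inner ℂ (ψ s - ψC s) d' : ℂ)
      = -Complex.I * ((p - v) - (starRingEnd ℂ u - q)) := by
    simp only [hd', inner_sub_left, inner_sub_right, inner_smul_right, hAsym, ← hu, ← hv, ← hp,
      ← hq]
    ring
  rw [hsum, hexp]
  have hAB : (inner ℂ (ψ s) ((A - B) (ψC s)) : ℂ) = u - v := by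
    rw [hu, hv, ContinuousLinearMap.sub_apply, inner_sub_right]
  rw [hAB]
  simp [Complex.mul_re, Complex.sub_im, Complex.sub_re, Complex.conj_im, Complex.conj_re,
    hAre, hBre]
  ring
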